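/- Let A ∈ B(H) be a difference of orthogonal projections, i.e., assume there exist orthogonal projections P, Q on H with P - Q = A. Then the set {(P,Q) : P, Q orthogonal projections on H, P - Q = A} consists of exactly one pair if and only if A is a symmetry, i.e., A is a selfadjoint unitary (equivalently A* = A and A² = 1). -/

import Mathlib

open ContinuousLinearMap

variable {H : Type*} [NormedAddCommGroup H] [InnerProductSpace ℂ H] [CompleteSpace H]

/-- An orthogonal projection: a selfadjoint idempotent bounded operator. -/
def IsOrthogonalProjection (P : H →L[ℂ] H) : Prop :=
  IsSelfAdjoint P ∧ P * P = P

/-- A symmetry: a selfadjoint unitary operator. -/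
def IsSymmetry (V : H →L[ℂ] H) : Prop :=
  IsSelfAdjoint V ∧ V * V = 1

/-- Two orthogonal projections are in generic position if the four canonical
intersections of their ranges and kernels are trivial. -/
def GenericPosition (P Q : H →L[ℂ] H) : Prop :=
  LinearMap.range (P : H →ₗ[ℂ] H) ⊓ LinearMap.range (Q : H →ₗ[ℂ] H) = ⊥ ∧
  LinearMap.range (P : H →ₗ[ℂ] H) ⊓ LinearMap.ker (Q : H →ₗ[ℂ] H) = ⊥ ∧
  LinearMap.ker (P : H →ₗ[ℂ] H) ⊓ LinearMap.range (Q : H →ₗ[ℂ] H) = ⊥ ∧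
  LinearMap.ker (P : H →ₗ[ℂ] H) ⊓ LinearMap.ker (Q : H →ₗ[ℂ] H) = ⊥


/-- If `A` is a difference of orthogonal projections, then the set of pairs of
orthogonal projections with difference `A` is a singleton iff `A` is a symmetry
(a selfadjoint unitary, i.e. `A* = A` and `A² = 1`). -/
theorem diff_pair_unique_iff_symmetry (A : H →L[ℂ] H)
    (h : ∃ P Q : H →L[ℂ] H,
      IsOrthogonalProjection P ∧ IsOrthogonalProjection Q ∧ P - Q = A) :
    (∃! PQ : (H →L[ℂ] H) × (H →L[ℂ] H),
        IsOrthogonalProjection PQ.1 ∧ IsOrthogonalProjection PQ.2 ∧ PQ.1 - PQ.2 = A) ↔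
      (IsSelfAdjoint A ∧ A * A = 1) := by
  obtain ⟨P, Q, hP, hQ, hPQ⟩ := h
  constructor
  · rintro ⟨w, hw, huniq⟩
    have h1 : (P, Q) = w := huniq _ ⟨hP, hQ, hPQ⟩
    have hproj1 : IsOrthogonalProjection ((1 : H →L[ℂ] H) - Q) := by
      refine ⟨(IsSelfAdjoint.one (H →L[ℂ] H)).sub hQ.1, ?_⟩
      simp only [mul_sub, sub_mul, mul_one, one_mul, hQ.2]
      abel
    have hproj2 : IsOrthogonalProjection ((1 : H →L[ℂ] H) - P) := by
      refine ⟨(IsSelfAdjoint.one (H →L[ℂ] H)).sub hP.1, ?_⟩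
      simp only [mul_sub, sub_mul, mul_one, one_mul, hP.2]
      abel
    have hdiff : ((1 : H →L[ℂ] H) - Q) - ((1 : H →L[ℂ] H) - P) = A := by
      rw [← hPQ]; abel
    have h2 : ((1 : H →L[ℂ] H) - Q, (1 : H →L[ℂ] H) - P) = w :=
      huniq _ ⟨hproj1, hproj2, hdiff⟩
    have h3 : P = (1 : H →L[ℂ] H) - Q := by
      have := h1.trans h2.symm
      exact (Prod.mk.injEq _ _ _ _ ▸ this).1
    have hA : A = 1 - Q - Q := by rw [← hPQ, h3]
    refine ⟨hPQ ▸ hP.1.sub hQ.1, ?_⟩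
    rw [hA]
    simp only [mul_sub, sub_mul, mul_one, one_mul, hQ.2]
    abel
  · rintro ⟨hsa, hA2⟩
    have key : ∀ R S : H →L[ℂ] H, IsOrthogonalProjection R → IsOrthogonalProjection S →
        R - S = A → R + R = 1 + A := by
      intro R S hR hS hRS
      have h1 : R - R * S - S * R + S = 1 := by
        calc R - R * S - S * R + S = (R - S) * (R - S) := by
              simp only [mul_sub, sub_mul, hR.2, hS.2]; abel
          _ = A * A := by rw [hRS]
          _ = 1 := hA2
      have hRSR : R * S * R = 0 := by
        have h3 : R - R * S * R = R := by
          calc R - R * S * R = R * (R - R * S - S * R + S) := by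
                simp only [mul_sub, mul_add, mul_one, ← mul_assoc, hR.2]; abel
            _ = R * 1 := by rw [h1]
            _ = R := mul_one R
        exact sub_eq_self.mp h3
      have hSRS : S * R * S = 0 := by
        have h3 : S - S * R * S = S := by
          calc S - S * R * S = S * (R - R * S - S * R + S) := by
                simp only [mul_sub, mul_add, mul_one, ← mul_assoc, hS.2]; abel
            _ = S * 1 := by rw [h1]
            _ = S := mul_one S
        exact sub_eq_self.mp h3
      have hSR : S * R = 0 := by
        have : star (S * R) * (S * R) = 0 := by
          rw [star_mul, hR.1.star_eq, hS.1.star_eq]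
          calc R * S * (S * R) = R * (S * S) * R := by noncomm_ring
            _ = R * S * R := by rw [hS.2]
            _ = 0 := hRSR
        exact (CStarRing.star_mul_self_eq_zero_iff _).mp this
      have hRS0 : R * S = 0 := by
        have := congrArg star hSR
        rwa [star_mul, hR.1.star_eq, hS.1.star_eq, star_zero] at this
      have hsum : R + S = 1 := by rw [← h1, hSR, hRS0]; abel
      calc R + R = (R - S) + (R + S) := by abel
        _ = 1 + A := by rw [hRS, hsum]; abel
    refine ⟨(P, Q), ⟨hP, hQ, hPQ⟩, ?_⟩
    rintro ⟨R, S⟩ ⟨hR, hS, hRS⟩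
    have hRP : R = P := by
      have h2 : (2 : ℂ) • R = (2 : ℂ) • P := by
        rw [two_smul, two_smul, key R S hR hS hRS, key P Q hP hQ hPQ]
      exact smul_right_injective (H →L[ℂ] H) (two_ne_zero) h2
    have hSQ : S = Q := by
      have : S = R - A := by rw [← hRS]; abel
      rw [this, hRP, ← hPQ]; abel
    simp [hRP, hSQ]
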